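/- Let $\Phi \in \mathbb{R}^{N \times d}$ have full column rank, let $K \in \mathbb{R}^{N\times N}$ be a positive-definite diagonal matrix, and let $F: \mathbb{R}^d \to \mathbb{R}^d$ be given by $\bar{F}(w) = \Phi^\top K (B(\Phi w) - \Phi w)$ where $B$ is a linear-affine operator such that $P B$ is a $\gamma_c$-contraction with respect to $\|x\|_K = (x^\top K x)^{1/2}$, $\gamma_c \in (0,1)$, with $P = \Phi(\Phi^\top K \Phi)^{-1}\Phi^\top K$ the $K$-orthogonal projection onto the column space of $\Phi$. Let $w^*$ be the unique solution of $\Phi w = PB(\Phi w)$ and let $\lambda_{\min} > 0$ be the minimum eigenvalue of $\Phi^\top K \Phi$. Then for all $w \in \mathbb{R}^d$, $(w - w^*)^\top \bar{F}(w) \le -(1-\gamma_c)\lambda_{\min}\|w - w^*\|_2^2$. -/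

import Mathlib

open Finset Matrix

theorem stmt_19 {N d : ℕ}
    (Φ : Matrix (Fin N) (Fin d) ℝ)
    (hΦ : Function.Injective (fun w : Fin d → ℝ => Φ.mulVec w))
    (K : Matrix (Fin N) (Fin N) ℝ) (hKdiag : K.IsDiag) (hKpos : K.PosDef)
    (normK : (Fin N → ℝ) → ℝ)
    (hnormK : ∀ x, normK x = Real.sqrt (x ⬝ᵥ K.mulVec x))
    (Pr : (Fin N → ℝ) → (Fin N → ℝ))
    (hPr : ∀ v, Pr v = Φ.mulVec ((Φᵀ * K * Φ)⁻¹.mulVec (Φᵀ.mulVec (K.mulVec v))))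
    (B : (Fin N → ℝ) → (Fin N → ℝ))
    (M : Matrix (Fin N) (Fin N) ℝ) (b : Fin N → ℝ)
    (hB : ∀ v, B v = M.mulVec v + b)
    (γc : ℝ) (hγc : γc ∈ Set.Ioo (0:ℝ) 1)
    (hcontr : ∀ v₁ v₂, normK (Pr (B v₁) - Pr (B v₂)) ≤ γc * normK (v₁ - v₂))
    (Fbar : (Fin d → ℝ) → (Fin d → ℝ))
    (hFbar : ∀ w, Fbar w = Φᵀ.mulVec (K.mulVec (B (Φ.mulVec w) - Φ.mulVec w)))
    (wstar : Fin d → ℝ) (hwstar : Φ.mulVec wstar = Pr (B (Φ.mulVec wstar)))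
    (lammin : ℝ) (hlampos : 0 < lammin)
    (hlam : ∀ v : Fin d → ℝ, lammin * (∑ i, (v i) ^ 2) ≤ v ⬝ᵥ (Φᵀ * K * Φ).mulVec v) :
    ∀ w : Fin d → ℝ,
      (fun i => w i - wstar i) ⬝ᵥ Fbar w
        ≤ -((1 - γc) * lammin * ∑ i, (w i - wstar i) ^ 2) := by
  obtain ⟨hγ0, hγ1⟩ := hγc
  -- diagonal entries of K are positive
  have hKdpos : ∀ i, 0 < K i i := by
    intro i
    have hne : (Pi.single i 1 : Fin N → ℝ) ≠ 0 := by
      intro h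
      have := congrFun h i
      simp [Pi.single_eq_same] at this
    have h := hKpos.dotProduct_mulVec_pos hne
    simpa [mulVec_single, dotProduct_single, single_dotProduct] using h
  -- diagonal formula for the K-inner product
  have hip : ∀ a c : Fin N → ℝ, a ⬝ᵥ K.mulVec c = ∑ i, a i * (K i i * c i) := by
    intro a c
    unfold dotProduct
    refine Finset.sum_congr rfl fun i _ => ?_
    congr 1
    show (∑ j, K i j * c j) = K i i * c i
    rw [Finset.sum_eq_single i]
    · exact fun j _ hj => by rw [hKdiag (Ne.symm hj), zero_mul]
    · intro h; exact absurd (Finset.mem_univ i) h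
  -- Cauchy-Schwarz for the K-inner product
  have hcs : ∀ a c : Fin N → ℝ, a ⬝ᵥ K.mulVec c ≤ normK a * normK c := by
    intro a c
    have hsq : ∀ i, Real.sqrt (K i i) * Real.sqrt (K i i) = K i i :=
      fun i => Real.mul_self_sqrt (hKdpos i).le
    have h1 : ∀ e : Fin N → ℝ, e ⬝ᵥ K.mulVec e = ∑ i, (Real.sqrt (K i i) * e i) ^ 2 := by
      intro e; rw [hip]
      exact Finset.sum_congr rfl fun i _ => by
        rw [mul_pow, Real.sq_sqrt (hKdpos i).le]; ring
    have h3 : a ⬝ᵥ K.mulVec c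
        = ∑ i, (Real.sqrt (K i i) * a i) * (Real.sqrt (K i i) * c i) := by
      rw [hip]
      exact Finset.sum_congr rfl fun i _ => by
        rw [mul_mul_mul_comm, hsq i]; ring
    rw [hnormK, hnormK, h1, h1, h3]
    exact Real.sum_mul_le_sqrt_mul_sqrt Finset.univ _ _
  -- Φᵀ K Φ is positive definite
  have hdot : ∀ u : Fin d → ℝ, u ⬝ᵥ (Φᵀ * K * Φ).mulVec u
      = (Φ.mulVec u) ⬝ᵥ K.mulVec (Φ.mulVec u) := by
    intro u
    rw [← mulVec_mulVec, ← mulVec_mulVec, dotProduct_mulVec, vecMul_transpose]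
  have hA : (Φᵀ * K * Φ).PosDef := by
    refine Matrix.PosDef.of_dotProduct_mulVec_pos ?_ ?_
    · have h := isHermitian_conjTranspose_mul_mul Φ hKpos.1
      simpa [conjTranspose_eq_transpose_of_trivial] using h
    · intro u hu
      have hΦu : Φ.mulVec u ≠ 0 := by
        intro h
        exact hu (hΦ (by simpa [mulVec_zero] using h))
      have := hKpos.dotProduct_mulVec_pos hΦu
      simpa [hdot u] using this
  have hdet : IsUnit (Φᵀ * K * Φ).det := (Matrix.isUnit_iff_isUnit_det _).mp hA.isUnit
  -- projection identity: Φᵀ K (Pr y) = Φᵀ K y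
  have hproj : ∀ y, Φᵀ.mulVec (K.mulVec (Pr y)) = Φᵀ.mulVec (K.mulVec y) := by
    intro y
    rw [hPr]
    generalize Φᵀ.mulVec (K.mulVec y) = u
    rw [mulVec_mulVec, mulVec_mulVec, mulVec_mulVec, Matrix.mul_nonsing_inv _ hdet,
      Matrix.one_mulVec]
  intro w
  set v : Fin d → ℝ := fun i => w i - wstar i with hv
  have hvsub : v = w - wstar := rfl
  set x : Fin N → ℝ := Φ.mulVec v with hx
  have hxsub : x = Φ.mulVec w - Φ.mulVec wstar := by
    rw [hx, hvsub, mulVec_sub]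
  set z : Fin N → ℝ := Pr (B (Φ.mulVec w)) - Pr (B (Φ.mulVec wstar)) with hz
  -- rewrite the LHS
  have e0 : Pr (B (Φ.mulVec w)) - Φ.mulVec w = z - x := by
    rw [hz, hxsub, ← hwstar]; abel
  have e1 : Fbar w = Φᵀ.mulVec (K.mulVec (z - x)) := by
    rw [hFbar, mulVec_sub K, Matrix.mulVec_sub Φᵀ, ← hproj (B (Φ.mulVec w)),
      ← Matrix.mulVec_sub Φᵀ, ← mulVec_sub K, e0]
  have hlhs : v ⬝ᵥ Fbar w = x ⬝ᵥ K.mulVec z - x ⬝ᵥ K.mulVec x := by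
    rw [e1, dotProduct_mulVec, vecMul_transpose, mulVec_sub, dotProduct_sub]
  have hs : x ⬝ᵥ K.mulVec x = v ⬝ᵥ (Φᵀ * K * Φ).mulVec v := (hdot v).symm
  have hsnn : lammin * (∑ i, (v i) ^ 2) ≤ x ⬝ᵥ K.mulVec x := by rw [hs]; exact hlam v
  have hsumnn : (0:ℝ) ≤ ∑ i, (v i) ^ 2 := Finset.sum_nonneg fun i _ => sq_nonneg _
  have hxnn : 0 ≤ normK x := by rw [hnormK]; exact Real.sqrt_nonneg _
  have hnx2 : normK x * normK x = x ⬝ᵥ K.mulVec x := by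
    rw [hnormK]
    exact Real.mul_self_sqrt (le_trans (by positivity) hsnn)
  have hzx : x ⬝ᵥ K.mulVec z ≤ γc * (x ⬝ᵥ K.mulVec x) := by
    calc x ⬝ᵥ K.mulVec z ≤ normK x * normK z := hcs x z
      _ ≤ normK x * (γc * normK (Φ.mulVec w - Φ.mulVec wstar)) := by
          apply mul_le_mul_of_nonneg_left (hcontr _ _) hxnn
      _ = γc * (normK x * normK x) := by rw [← hxsub]; ring
      _ = γc * (x ⬝ᵥ K.mulVec x) := by rw [hnx2]
  calc v ⬝ᵥ Fbar w = x ⬝ᵥ K.mulVec z - x ⬝ᵥ K.mulVec x := hlhs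
    _ ≤ γc * (x ⬝ᵥ K.mulVec x) - x ⬝ᵥ K.mulVec x := by linarith
    _ = -((1 - γc) * (x ⬝ᵥ K.mulVec x)) := by ring
    _ ≤ -((1 - γc) * lammin * ∑ i, (v i) ^ 2) := by nlinarith
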